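/- Let ε > 0 and let τ ∈ ℂ with Im(τ) > 0. Then the function f_τ(x) = exp(πiτx²/ε) is a Schwartz function on ℝ, it satisfies f_τ′(x) = (2πiτx/ε)·f_τ(x) for all x ∈ ℝ, and every Schwartz function f : ℝ → ℂ satisfying f′(x) = (2πiτx/ε)·f(x) for all x ∈ ℝ is a complex scalar multiple of f_τ. -/

import Mathlib

open Complex Real

lemma gauss_hasDerivAt (a : ℂ) (z : ℂ) :
    HasDerivAt (fun z : ℂ => Complex.exp (-a * z ^ 2)) (-2 * a * z * Complex.exp (-a * z ^ 2)) z := by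
  have h := ((hasDerivAt_pow 2 z).const_mul (-a)).cexp
  refine h.congr_deriv ?_
  ring

lemma gauss_poly (a : ℂ) (n : ℕ) :
    ∃ p : Polynomial ℂ, ∀ x : ℝ,
      iteratedDeriv n (fun x : ℝ => Complex.exp (-a * (x : ℂ) ^ 2)) x
        = p.eval (x : ℂ) * Complex.exp (-a * (x : ℂ) ^ 2) := by
  induction n with
  | zero => exact ⟨1, fun x => by simp⟩
  | succ n ih =>
      obtain ⟨p, hp⟩ := ih
      refine ⟨p.derivative + p * (Polynomial.C (-2 * a) * Polynomial.X), fun x => ?_⟩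
      rw [iteratedDeriv_succ, funext hp]
      have h1 : HasDerivAt (fun x : ℝ => p.eval (x : ℂ)) (p.derivative.eval (x : ℂ)) x :=
        (p.hasDerivAt (x : ℂ)).comp_ofReal
      have h2 : HasDerivAt (fun x : ℝ => Complex.exp (-a * (x : ℂ) ^ 2))
          (-2 * a * x * Complex.exp (-a * (x : ℂ) ^ 2)) x := (gauss_hasDerivAt a x).comp_ofReal
      have := (h1.mul h2).deriv
      erw [this]
      simp only [Polynomial.eval_add, Polynomial.eval_mul, Polynomial.eval_C, Polynomial.eval_X]
      ring

lemma pow_mul_exp_bound {c : ℝ} (hc : 0 < c) (m : ℕ) (x : ℝ) :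
    |x| ^ m * Real.exp (-c * x ^ 2) ≤ 1 + m.factorial / c ^ m := by
  have hexp : Real.exp (-c * x ^ 2) ≤ 1 := by
    apply Real.exp_le_one_iff.2
    nlinarith [sq_nonneg x]
  rcases le_or_gt (|x|) 1 with h | h
  · have h1 : |x| ^ m ≤ 1 := pow_le_one₀ (abs_nonneg x) h
    have h2 : |x| ^ m * Real.exp (-c * x ^ 2) ≤ 1 :=
      mul_le_one₀ h1 (Real.exp_nonneg _) hexp
    have hpos : 0 ≤ (m.factorial : ℝ) / c ^ m := by positivity
    linarith
  · have hx1 : |x| ^ m ≤ (x ^ 2) ^ m := by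
      rw [← _root_.sq_abs, ← pow_mul]
      exact pow_le_pow_right₀ h.le (by omega)
    have hkey : (c * x ^ 2) ^ m / m.factorial ≤ Real.exp (c * x ^ 2) :=
      Real.pow_div_factorial_le_exp _ (by positivity) m
    have h2 : (x ^ 2) ^ m * Real.exp (-c * x ^ 2) ≤ m.factorial / c ^ m := by
      rw [div_le_iff₀ (by positivity : (0:ℝ) < (m.factorial : ℝ)), mul_pow] at hkey
      have hprod : Real.exp (-c * x ^ 2) * Real.exp (c * x ^ 2) = 1 := by
        rw [← Real.exp_add]; simp
      rw [le_div_iff₀ (by positivity : (0:ℝ) < c ^ m)]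
      nlinarith [mul_le_mul_of_nonneg_right hkey (Real.exp_nonneg (-c * x ^ 2)),
        Real.exp_nonneg (-c * x ^ 2), Real.exp_nonneg (c * x ^ 2)]
    have := mul_le_mul_of_nonneg_right hx1 (Real.exp_nonneg (-c * x ^ 2))
    linarith

lemma gauss_decay {a : ℂ} (ha : 0 < a.re) (k n : ℕ) :
    ∃ C, ∀ x : ℝ, ‖x‖ ^ k * ‖iteratedFDeriv ℝ n (fun x : ℝ => Complex.exp (-a * (x : ℂ) ^ 2)) x‖ ≤ C := by
  obtain ⟨p, hp⟩ := gauss_poly a n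
  refine ⟨∑ i ∈ Finset.range (p.natDegree + 1),
    ‖p.coeff i‖ * (1 + (k + i).factorial / a.re ^ (k + i)), fun x => ?_⟩
  rw [norm_iteratedFDeriv_eq_norm_iteratedDeriv, hp x, norm_mul, norm_cexp_neg_mul_sq]
  have hb : ‖p.eval (x : ℂ)‖ ≤ ∑ i ∈ Finset.range (p.natDegree + 1),
      ‖p.coeff i‖ * |x| ^ i := by
    rw [Polynomial.eval_eq_sum_range]
    refine (norm_sum_le _ _).trans (Finset.sum_le_sum fun i _ => ?_)
    rw [norm_mul, norm_pow, Complex.norm_real, Real.norm_eq_abs]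
  calc ‖x‖ ^ k * (‖p.eval (x : ℂ)‖ * Real.exp (-a.re * x ^ 2))
      ≤ ‖x‖ ^ k * ((∑ i ∈ Finset.range (p.natDegree + 1),
          ‖p.coeff i‖ * |x| ^ i) * Real.exp (-a.re * x ^ 2)) := by
        apply mul_le_mul_of_nonneg_left _ (by positivity)
        exact mul_le_mul_of_nonneg_right hb (Real.exp_nonneg _)
    _ = ∑ i ∈ Finset.range (p.natDegree + 1),
          ‖p.coeff i‖ * (|x| ^ (k + i) * Real.exp (-a.re * x ^ 2)) := by
        rw [Finset.sum_mul, Finset.mul_sum]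
        refine Finset.sum_congr rfl fun i _ => ?_
        rw [Real.norm_eq_abs, pow_add]; ring
    _ ≤ _ := Finset.sum_le_sum fun i _ => mul_le_mul_of_nonneg_left
        (pow_mul_exp_bound ha (k + i) x) (norm_nonneg _)

/-- For `ε > 0` and `τ` in the upper half-plane, the function
`f_τ(x) = exp(πiτx²/ε)` is a Schwartz function, satisfies
`f_τ′ = (2πiτx/ε)·f_τ`, and up to scalar it is the unique Schwartz solution of
this equation (the holomorphic vector of the Heisenberg representation). -/
theorem holomorphic_vector_exists_unique (ε : ℝ) (hε : 0 < ε)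
    (τ : ℂ) (hτ : 0 < τ.im) :
    ∃ fτ : SchwartzMap ℝ ℂ,
      (∀ x : ℝ, fτ x = Complex.exp (π * I * τ * (x : ℂ) ^ 2 / (ε : ℂ))) ∧
      (∀ x : ℝ, deriv (fτ : ℝ → ℂ) x = (2 * π * I * τ * (x : ℂ) / (ε : ℂ)) * fτ x) ∧
      (∀ f : SchwartzMap ℝ ℂ,
        (∀ x : ℝ, deriv (f : ℝ → ℂ) x = (2 * π * I * τ * (x : ℂ) / (ε : ℂ)) * f x) →
        ∃ c : ℂ, ∀ x : ℝ, f x = c * fτ x) := by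
  set a : ℂ := -(↑π * I * τ) / ↑ε with ha_def
  have ha : 0 < a.re := by
    have : a = ((π * τ.im / ε : ℝ) : ℂ) + ((- π * τ.re / ε : ℝ) : ℂ) * I := by
      rw [ha_def]
      rw [Complex.ext_iff]
      constructor <;> simp [Complex.div_re, Complex.div_im, Complex.normSq_ofReal]
    rw [this]
    simp only [Complex.add_re, Complex.ofReal_re, Complex.mul_re, Complex.I_re, Complex.I_im,
      Complex.ofReal_im]
    have : 0 < π * τ.im / ε := by positivity
    simpa using this
  have hsmooth : ContDiff ℝ ((⊤ : ℕ∞) : WithTop ℕ∞) (fun x : ℝ => Complex.exp (-a * (x : ℂ) ^ 2)) := by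
    apply Complex.contDiff_exp.comp
    exact contDiff_const.mul (Complex.ofRealCLM.contDiff.pow 2)
  set fτ : SchwartzMap ℝ ℂ := ⟨fun x : ℝ => Complex.exp (-a * (x : ℂ) ^ 2), hsmooth,
    fun k n => gauss_decay ha k n⟩ with hfτ
  have hετ : (ε : ℂ) ≠ 0 := Complex.ofReal_ne_zero.2 hε.ne'
  have hval : ∀ x : ℝ, fτ x = Complex.exp (π * I * τ * (x : ℂ) ^ 2 / (ε : ℂ)) := by
    intro x
    show Complex.exp (-a * (x : ℂ) ^ 2) = _
    congr 1
    rw [ha_def]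
    field_simp
  have hderivg : ∀ x : ℝ, HasDerivAt (fun x : ℝ => Complex.exp (-a * (x : ℂ) ^ 2))
      (-2 * a * x * Complex.exp (-a * (x : ℂ) ^ 2)) x :=
    fun x => (gauss_hasDerivAt a (x : ℂ)).comp_ofReal
  have hcoe : (fτ : ℝ → ℂ) = fun x : ℝ => Complex.exp (-a * (x : ℂ) ^ 2) := rfl
  refine ⟨fτ, hval, fun x => ?_, fun f hf => ?_⟩
  · rw [hcoe, (hderivg x).deriv]
    show _ = (2 * ↑π * I * τ * (x : ℂ) / (ε : ℂ)) * Complex.exp (-a * (x : ℂ) ^ 2)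
    rw [ha_def]
    ring
  · set h : ℝ → ℂ := fun x => f x * Complex.exp (a * (x : ℂ) ^ 2) with hh
    have hd : ∀ x : ℝ, HasDerivAt h 0 x := by
      intro x
      have hfd : HasDerivAt (f : ℝ → ℂ) (deriv (f : ℝ → ℂ) x) x :=
        (f.differentiable.differentiableAt).hasDerivAt
      have hge : HasDerivAt (fun x : ℝ => Complex.exp (a * (x : ℂ) ^ 2))
          (2 * a * x * Complex.exp (a * (x : ℂ) ^ 2)) x := by
        have := (gauss_hasDerivAt (-a) (x : ℂ)).comp_ofReal
        simp only [neg_neg] at this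
        convert this using 1
        ring
      have := hfd.mul hge
      refine this.congr_deriv ?_
      rw [hf x, ha_def]
      ring
    have hconst : ∀ x : ℝ, h x = h 0 := fun x =>
      is_const_of_deriv_eq_zero (fun y => (hd y).differentiableAt)
        (fun y => (hd y).deriv) x 0
    refine ⟨f 0, fun x => ?_⟩
    have h0 : h 0 = f 0 := by simp [hh]
    have hx : h x * Complex.exp (-a * (x : ℂ) ^ 2) = f x := by
      rw [hh]
      simp only []
      rw [mul_assoc, ← Complex.exp_add]
      simp [mul_comm]
    rw [← hx, hconst x, h0]
    rfl
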